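/- Let X be a finite set and let t ↦ W(t), t ∈ [0,1], be a continuous family of rate matrices on X with symmetric support at every time. Let p(·) be a solution of the master equation dp_x(t)/dt = Σ_{x'} W_{x;x'}(t) p_{x'}(t) with p(t) a strictly positive probability distribution for all t ∈ [0,1], and assume the entropy-flow rate is integrable on [0,1]. Then the total entropy flow Q = ∫_0^1 Σ_{x≠x'} W_{x;x'}(t) p_{x'}(t) ln( W_{x;x'}(t) / W_{x';x}(t) ) dt satisfies the generalized Landauer bound Q ≥ S(p(0)) − S(p(1)). -/

import Mathlib

open MeasureTheory

private lemma antisym_sum {X : Type*} [Fintype X] [DecidableEq X] (F : X → X → ℝ) :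
    ∑ x : X, ∑ x' : X, (if x = x' then (0:ℝ) else F x x' - F x' x) = 0 := by
  have h1 : ∀ x x' : X, (if x = x' then (0:ℝ) else F x x' - F x' x) = F x x' - F x' x := by
    intro x x'
    split
    · next h => subst h; ring
    · rfl
  simp_rw [h1, Finset.sum_sub_distrib]
  rw [show (∑ x : X, ∑ x' : X, F x' x) = ∑ x : X, ∑ x' : X, F x x' from Finset.sum_comm]
  exact sub_self _

private lemma key_identity {X : Type*} [Fintype X] [DecidableEq X]
    (w : X → X → ℝ) (q g : X → ℝ) (hcol : ∀ x', ∑ x, w x x' = 0) :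
    ∑ x, (∑ x', w x x' * q x') * g x
      = ∑ x, ∑ x', (if x = x' then (0:ℝ) else w x x' * q x' * (g x - g x')) := by
  have h1 : ∀ x x' : X, (if x = x' then (0:ℝ) else w x x' * q x' * (g x - g x'))
      = w x x' * q x' * (g x - g x') := by
    intro x x'
    split
    · next h => subst h; ring
    · rfl
  have h2 : ∑ x : X, ∑ x' : X, w x x' * q x' * g x' = 0 := by
    rw [Finset.sum_comm]
    refine Finset.sum_eq_zero fun x' _ => ?_
    have : ∑ x : X, w x x' * q x' * g x' = (∑ x : X, w x x') * (q x' * g x') := by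
      rw [Finset.sum_mul]
      exact Finset.sum_congr rfl fun x _ => by ring
    rw [this, hcol, zero_mul]
  simp_rw [h1, mul_sub, Finset.sum_sub_distrib, h2, sub_zero, ← Finset.sum_mul]

private lemma term_ineq (a b c d : ℝ) (ha : 0 ≤ a) (hb : 0 ≤ b) (hab : 0 < a ↔ 0 < b)
    (hc : 0 < c) (hd : 0 < d) :
    a * d * (Real.log c - Real.log d) + (a * d - b * c) ≤ a * d * Real.log (a / b) := by
  rcases eq_or_lt_of_le ha with h | h
  · have hb0 : b = 0 := by
      by_contra hb0
      have : 0 < b := lt_of_le_of_ne hb (Ne.symm hb0)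
      exact absurd (hab.mpr this) (by rw [← h]; exact lt_irrefl 0)
    simp [← h, hb0]
  · have hbpos : 0 < b := hab.mp h
    have hA : 0 < a * d := mul_pos h hd
    have hB : 0 < b * c := mul_pos hbpos hc
    have hlog : Real.log ((b * c) / (a * d)) ≤ (b * c) / (a * d) - 1 :=
      Real.log_le_sub_one_of_pos (div_pos hB hA)
    have hm := mul_le_mul_of_nonneg_left hlog hA.le
    have he : (a * d) * ((b * c) / (a * d) - 1) = b * c - a * d := by field_simp
    rw [he] at hm
    have h2 : a * d - b * c ≤ a * d * Real.log ((a * d) / (b * c)) := by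
      rw [Real.log_div hB.ne' hA.ne'] at hm
      rw [Real.log_div hA.ne' hB.ne']
      nlinarith [hm]
    have h3 : Real.log (a / b) = Real.log ((a * d) / (b * c)) + Real.log c - Real.log d := by
      rw [Real.log_div h.ne' hbpos.ne', Real.log_div hA.ne' hB.ne',
        Real.log_mul h.ne' hd.ne', Real.log_mul hbpos.ne' hc.ne']
      ring
    rw [h3]
    nlinarith [h2]

/-- the generalized Landauer bound: the total entropy flow is at
least the drop in Shannon entropy from time 0 to time 1. -/
theorem generalized_landauer_bound
    {X : Type*} [Fintype X] [DecidableEq X]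
    (W : ℝ → X → X → ℝ) (p : ℝ → X → ℝ)
    (hWcont : ∀ x x', ContinuousOn (fun t => W t x x') (Set.Icc 0 1))
    (hWoff : ∀ t ∈ Set.Icc (0:ℝ) 1, ∀ x x', x ≠ x' → 0 ≤ W t x x')
    (hWcol : ∀ t ∈ Set.Icc (0:ℝ) 1, ∀ x', ∑ x, W t x x' = 0)
    (hWsym : ∀ t ∈ Set.Icc (0:ℝ) 1, ∀ x x', x ≠ x' → (0 < W t x x' ↔ 0 < W t x' x))
    (hode : ∀ t ∈ Set.Icc (0:ℝ) 1, ∀ x,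
      HasDerivWithinAt (fun s => p s x) (∑ x', W t x x' * p t x') (Set.Icc 0 1) t)
    (hpos : ∀ t ∈ Set.Icc (0:ℝ) 1, ∀ x, 0 < p t x)
    (hdist : ∀ t ∈ Set.Icc (0:ℝ) 1, ∑ x, p t x = 1)
    (hint : IntervalIntegrable (fun t => ∑ x, ∑ x', if x = x' then 0 else
        W t x x' * p t x' * Real.log (W t x x' / W t x' x)) volume 0 1) :
    (-∑ x, p 0 x * Real.log (p 0 x)) - (-∑ x, p 1 x * Real.log (p 1 x)) ≤
      ∫ t in (0:ℝ)..1, ∑ x, ∑ x', if x = x' then 0 else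
        W t x x' * p t x' * Real.log (W t x x' / W t x' x) := by
  set S : ℝ → ℝ := fun t => -∑ x, p t x * Real.log (p t x) with hS
  set S' : ℝ → ℝ := fun t =>
    -∑ x, (∑ x', W t x x' * p t x') * (Real.log (p t x) + 1) with hS'
  set flow : ℝ → ℝ := fun t => ∑ x, ∑ x', if x = x' then (0:ℝ) else
      W t x x' * p t x' * Real.log (W t x x' / W t x' x) with hflow
  -- continuity of p
  have hpc : ∀ x, ContinuousOn (fun s => p s x) (Set.Icc 0 1) :=
    fun x t ht => (hode t ht x).continuousWithinAt
  -- derivative of S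
  have hSd : ∀ t ∈ Set.Icc (0:ℝ) 1, HasDerivWithinAt S (S' t) (Set.Icc 0 1) t := by
    intro t ht
    have hx : ∀ x ∈ Finset.univ, HasDerivWithinAt (fun s => p s x * Real.log (p s x))
        ((∑ x', W t x x' * p t x') * (Real.log (p t x) + 1)) (Set.Icc 0 1) t := by
      intro x _
      have hpx := hode t ht x
      have hne : p t x ≠ 0 := (hpos t ht x).ne'
      have hplog : HasDerivWithinAt (fun s => Real.log (p s x))
          ((p t x)⁻¹ * (∑ x', W t x x' * p t x')) (Set.Icc 0 1) t :=
        by have := (Real.hasDerivAt_log hne).comp_hasDerivWithinAt t hpx; exact this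
      have hmul := hpx.mul hplog
      have e : (∑ x', W t x x' * p t x') * (Real.log (p t x) + 1) = (∑ x', W t x x' * p t x') * Real.log (p t x) + p t x * ((p t x)⁻¹ * ∑ x', W t x x' * p t x') := by
        rw [← mul_assoc, mul_inv_cancel₀ hne]; ring
      rw [e]; exact hmul
    have := (HasDerivWithinAt.fun_sum hx).neg
    exact this
  -- continuity of S and S'
  have hScont : ContinuousOn S (Set.Icc 0 1) := fun t ht => (hSd t ht).continuousWithinAt
  have hS'cont : ContinuousOn S' (Set.Icc 0 1) := by
    rw [hS']
    apply ContinuousOn.neg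
    apply continuousOn_finset_sum
    intro x _
    apply ContinuousOn.mul
    · apply continuousOn_finset_sum
      intro x' _
      exact (hWcont x x').mul (hpc x')
    · exact (ContinuousOn.log (hpc x) fun t ht => (hpos t ht x).ne').add continuousOn_const
  have huIcc : Set.uIcc (0:ℝ) 1 = Set.Icc 0 1 := Set.uIcc_of_le zero_le_one
  have hS'int : IntervalIntegrable S' volume 0 1 :=
    (by rw [huIcc]; exact hS'cont : ContinuousOn S' (Set.uIcc 0 1)).intervalIntegrable
  -- FTC
  have hftc : ∫ t in (0:ℝ)..1, S' t = S 1 - S 0 :=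
    intervalIntegral.integral_eq_sub_of_hasDeriv_right_of_le zero_le_one hScont
      (fun t ht => (hSd t (Set.Ioo_subset_Icc_self ht)).mono_of_mem_nhdsWithin
        (Icc_mem_nhdsGT_of_mem ⟨ht.1.le, ht.2⟩))
      hS'int
  -- pointwise second law
  have hpoint : ∀ t ∈ Set.Icc (0:ℝ) 1, -S' t ≤ flow t := by
    intro t ht
    have hkey : -S' t = ∑ x, ∑ x', (if x = x' then (0:ℝ) else
        W t x x' * p t x' * (Real.log (p t x) - Real.log (p t x'))) := by
      have hk := key_identity (W t) (p t) (fun x => Real.log (p t x) + 1) (hWcol t ht)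
      simp only [hS', neg_neg]
      rw [hk]
      refine Finset.sum_congr rfl fun x _ => Finset.sum_congr rfl fun x' _ => ?_
      split
      · rfl
      · ring
    have hanti := antisym_sum (fun x x' => W t x x' * p t x')
    have hterm : ∀ x ∈ (Finset.univ : Finset X), ∀ x' ∈ (Finset.univ : Finset X),
        (if x = x' then (0:ℝ) else
          W t x x' * p t x' * (Real.log (p t x) - Real.log (p t x')))
        + (if x = x' then (0:ℝ) else W t x x' * p t x' - W t x' x * p t x)
        ≤ (if x = x' then (0:ℝ) else
          W t x x' * p t x' * Real.log (W t x x' / W t x' x)) := by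
      intro x _ x' _
      by_cases h : x = x'
      · simp [h]
      · simp only [if_neg h]
        have hti := term_ineq (W t x x') (W t x' x) (p t x) (p t x')
          (hWoff t ht x x' h) (hWoff t ht x' x (Ne.symm h)) (hWsym t ht x x' h)
          (hpos t ht x) (hpos t ht x')
        linarith [hti]
    have hsum : (∑ x, ∑ x', ((if x = x' then (0:ℝ) else
          W t x x' * p t x' * (Real.log (p t x) - Real.log (p t x')))
        + (if x = x' then (0:ℝ) else W t x x' * p t x' - W t x' x * p t x)))
        ≤ flow t := by
      rw [hflow]
      exact Finset.sum_le_sum fun x hx => Finset.sum_le_sum fun x' hx' => hterm x hx x' hx'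
    rw [hkey]
    simp only [Finset.sum_add_distrib] at hsum
    rw [hanti, add_zero] at hsum
    exact hsum
  -- put everything together
  have hmono := intervalIntegral.integral_mono_on zero_le_one hS'int.neg hint hpoint
  have hneg : ∫ t in (0:ℝ)..1, -S' t = -(S 1 - S 0) := by
    rw [intervalIntegral.integral_neg, hftc]
  show S 0 - S 1 ≤ ∫ t in (0:ℝ)..1, flow t
  calc S 0 - S 1 = ∫ t in (0:ℝ)..1, -S' t := by rw [hneg]; ring
    _ ≤ ∫ t in (0:ℝ)..1, flow t := hmono
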